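/- A graded poset P is k-Eulerian if and only if μ_{2k}([x,y]) = 0 for every interval [x,y] ⊆ P of positive even rank. -/

import Mathlib

open scoped Classical

attribute [local instance] Fintype.ofFinite

/-- A rank function making a bounded poset graded of rank `n+1`. -/
def IsGraded (P : Type) [PartialOrder P] [BoundedOrder P] (ρ : P → ℕ) (n : ℕ) : Prop :=
  ρ ⊥ = 0 ∧ ρ ⊤ = n + 1 ∧ ∀ x y : P, x ⋖ y → ρ y = ρ x + 1

/-- A poset is `r`-thick if every nonempty open interval has at least `r` elements. -/
def RThick (P : Type) [PartialOrder P] [Fintype P] (r : ℕ) : Prop :=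
  ∀ x y : P, x < y → (∃ z, x < z ∧ z < y) →
    r ≤ (Finset.univ.filter fun z => x < z ∧ z < y).card

/-- The flag number `f_S(P)`: the number of chains of `P` whose set of ranks is `S`. -/
noncomputable def flagNum {P : Type} [PartialOrder P] [Fintype P] (ρ : P → ℕ)
    (S : Finset ℕ) : ℕ :=
  (Finset.univ.filter fun c : Finset P =>
    IsChain (· ≤ ·) (c : Set P) ∧ c.image ρ = S ∧ c.card = S.card).card

/-- The flag number `f_S([x,y])` of the interval `[x,y]`, with ranks relative to `x`. -/
noncomputable def flagNumI {P : Type} [PartialOrder P] [Fintype P] (ρ : P → ℕ)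
    (x y : P) (S : Finset ℕ) : ℕ :=
  (Finset.univ.filter fun c : Finset P =>
    IsChain (· ≤ ·) (c : Set P) ∧ (∀ z ∈ c, x < z ∧ z < y) ∧
      c.image (fun z => ρ z - ρ x) = S ∧ c.card = S.card).card

/-- The `k`-Möbius function `μ_k([x,y])`. -/
noncomputable def muk {P : Type} [PartialOrder P] [Fintype P] (k : ℝ) (x : P) (y : P) : ℝ :=
  if x = y then 1
  else -1 - (1/k) * ∑ z ∈ (Finset.univ.filter fun z => x < z ∧ z < y).attach,
    muk k x z.val
termination_by (Finset.univ.filter fun w => w < y).card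
decreasing_by
  have hz : (z : P) < y := (Finset.mem_filter.mp z.2).2.2
  apply Finset.card_lt_card
  rw [Finset.ssubset_iff_of_subset]
  · exact ⟨z, Finset.mem_filter.mpr ⟨Finset.mem_univ _, hz⟩,
      fun hc => absurd (Finset.mem_filter.mp hc).2 (lt_irrefl _)⟩
  · intro w hw
    exact Finset.mem_filter.mpr ⟨Finset.mem_univ _, (Finset.mem_filter.mp hw).2.trans hz⟩

/-- The ordinary Möbius function of a finite poset. -/
noncomputable def mobius {P : Type} [PartialOrder P] [Fintype P] (x : P) (y : P) : ℤ :=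
  if x = y then 1
  else -∑ z ∈ (Finset.univ.filter fun z => x ≤ z ∧ z < y).attach, mobius x z.val
termination_by (Finset.univ.filter fun w => w < y).card
decreasing_by
  have hz : (z : P) < y := (Finset.mem_filter.mp z.2).2.2
  apply Finset.card_lt_card
  rw [Finset.ssubset_iff_of_subset]
  · exact ⟨z, Finset.mem_filter.mpr ⟨Finset.mem_univ _, hz⟩,
      fun hc => absurd (Finset.mem_filter.mp hc).2 (lt_irrefl _)⟩
  · intro w hw
    exact Finset.mem_filter.mpr ⟨Finset.mem_univ _, (Finset.mem_filter.mp hw).2.trans hz⟩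

/-- A graded poset is `k`-Eulerian when `μ_k([x,y]) = (-1)^{ρ(y)-ρ(x)}` on every interval. -/
def IsKEulerian (P : Type) [PartialOrder P] [Fintype P] (ρ : P → ℕ) (k : ℝ) : Prop :=
  ∀ x y : P, x ≤ y → muk k x y = (-1 : ℝ) ^ (ρ y - ρ x)

/-- The flag `L^k` vector of a poset of rank `n+1`. -/
noncomputable def Lk {P : Type} [PartialOrder P] [Fintype P] (k : ℝ) (n : ℕ) (ρ : P → ℕ)
    (S : Finset ℕ) : ℝ :=
  (-1 : ℝ) ^ (n - S.card) *
    ∑ T ∈ (Finset.Icc 1 n).powerset.filter (fun T => Finset.Icc 1 n \ S ⊆ T),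
      (-(1/(2*k))) ^ T.card * (flagNum ρ T : ℝ)

/-- The flag `L^k` vector of an interval `[x,y]` of rank `n+1`. -/
noncomputable def LkI {P : Type} [PartialOrder P] [Fintype P] (k : ℝ) (n : ℕ) (ρ : P → ℕ)
    (x y : P) (S : Finset ℕ) : ℝ :=
  (-1 : ℝ) ^ (n - S.card) *
    ∑ T ∈ (Finset.Icc 1 n).powerset.filter (fun T => Finset.Icc 1 n \ S ⊆ T),
      (-(1/(2*k))) ^ T.card * (flagNumI ρ x y T : ℝ)

/-- A set is even if it is a disjoint union of intervals of even cardinality. -/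
def IsEvenSet (S : Finset ℕ) : Prop :=
  ∃ J : Finset (ℕ × ℕ),
    S = J.biUnion (fun p => Finset.Icc p.1 p.2) ∧
    (∀ p ∈ J, p.1 ≤ p.2 ∧ Even (p.2 + 1 - p.1)) ∧
    (∀ p ∈ J, ∀ q ∈ J, p ≠ q → Disjoint (Finset.Icc p.1 p.2) (Finset.Icc q.1 q.2))

/-- The horizontal `r`-fold duplication `D^r P`. -/
inductive Dup (P : Type) [PartialOrder P] [BoundedOrder P] (r : ℕ) : Type where
  | bot : Dup P r
  | top : Dup P r
  | mid : {x : P // x ≠ ⊥ ∧ x ≠ ⊤} → Fin r → Dup P r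

namespace Dup

variable {P : Type} [PartialOrder P] [BoundedOrder P] {r : ℕ}

def le : Dup P r → Dup P r → Prop
  | .bot, _ => True
  | .mid _ _, .bot => False
  | .mid x i, .mid y j => (x = y ∧ i = j) ∨ (x : P) < (y : P)
  | .mid _ _, .top => True
  | .top, .top => True
  | .top, _ => False

instance : PartialOrder (Dup P r) where
  le := Dup.le
  le_refl a := by cases a with
    | bot => trivial
    | top => trivial
    | mid x i => exact Or.inl ⟨rfl, rfl⟩
  le_trans a b c hab hbc := by
    cases a with
    | bot => trivial
    | top =>
      cases b with
      | top =>
        cases c with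
        | top => trivial
        | bot => exact hbc.elim
        | mid _ _ => exact hbc.elim
      | bot => exact hab.elim
      | mid _ _ => exact hab.elim
    | mid x i =>
      cases b with
      | bot => exact hab.elim
      | top =>
        cases c with
        | top => trivial
        | bot => exact hbc.elim
        | mid _ _ => exact hbc.elim
      | mid y j =>
        cases c with
        | bot => exact hbc.elim
        | top => trivial
        | mid z l =>
          rcases hab with ⟨rfl, rfl⟩ | h1
          · exact hbc
          · rcases hbc with ⟨rfl, rfl⟩ | h2
            · exact Or.inr h1
            · exact Or.inr (h1.trans h2)
  le_antisymm a b hab hba := by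
    cases a with
    | bot =>
      cases b with
      | bot => rfl
      | top => exact hba.elim
      | mid _ _ => exact hba.elim
    | top =>
      cases b with
      | top => rfl
      | bot => exact hab.elim
      | mid _ _ => exact hab.elim
    | mid x i =>
      cases b with
      | bot => exact hab.elim
      | top => exact hba.elim
      | mid y j =>
        rcases hab with ⟨rfl, rfl⟩ | h1
        · rfl
        · rcases hba with ⟨rfl, rfl⟩ | h2
          · exact absurd h1 (lt_irrefl _)
          · exact absurd (h1.trans h2) (lt_irrefl _)

instance : BoundedOrder (Dup P r) where
  top := .top
  bot := .bot
  le_top a := by cases a <;> trivial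
  bot_le a := trivial

instance [Finite P] : Finite (Dup P r) :=
  Finite.of_injective
    (fun a : Dup P r =>
      (match a with
        | .bot => none
        | .top => some none
        | .mid x i => some (some (x, i)) :
        Option (Option ({x : P // x ≠ ⊥ ∧ x ≠ ⊤} × Fin r))))
    (by intro a b h; cases a <;> cases b <;> simp_all)

/-- The rank function of `D^r P`, where `P` has rank `n+1`. -/
def rank (ρ : P → ℕ) (n : ℕ) : Dup P r → ℕ
  | .bot => 0
  | .top => n + 1
  | .mid x _ => ρ x.val

/-- `a ∈ D^r P` is a copy of `x ∈ P`. -/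
def IsCopy (a : Dup P r) (x : P) : Prop :=
  (x = ⊥ ∧ a = .bot) ∨ (x = ⊤ ∧ a = .top) ∨ ∃ h i, a = .mid ⟨x, h⟩ i

end Dup

set_option linter.unusedSectionVars false

section HalfAux

open Finset

variable {P : Type} [PartialOrder P] [Fintype P] {ρ : P → ℕ} {k : ℝ}

private noncomputable def Oset (x y : P) : Finset P :=
  Finset.univ.filter fun z => x < z ∧ z < y

private noncomputable def Iset (x y : P) : Finset P :=
  Finset.univ.filter fun z => x ≤ z ∧ z ≤ y

private lemma mem_Iset {x y z : P} : z ∈ Iset x y ↔ x ≤ z ∧ z ≤ y := by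
  simp [Iset]

private lemma mem_Oset {x y z : P} : z ∈ Oset x y ↔ x < z ∧ z < y := by
  simp [Oset]

private lemma muk_rec (k : ℝ) {x y : P} (h : x ≠ y) :
    muk k x y = -1 - (1/k) * ∑ z ∈ Oset x y, muk k x z := by
  rw [muk, if_neg h, Finset.sum_attach]
  rfl

private lemma muk_self (k : ℝ) (x : P) : muk k x x = 1 := by
  rw [muk, if_pos rfl]

private lemma Iset_self (x : P) : Iset x x = {x} := by
  ext z
  simp only [mem_Iset, Finset.mem_singleton]
  constructor
  · rintro ⟨h1, h2⟩; exact le_antisymm h2 h1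
  · rintro rfl; exact ⟨le_rfl, le_rfl⟩

private lemma sum_Iset {x y : P} (h : x < y) (f : P → ℝ) :
    ∑ z ∈ Iset x y, f z = f x + f y + ∑ z ∈ Oset x y, f z := by
  have hxy : x ≠ y := ne_of_lt h
  have h1 : Iset x y = insert x (insert y (Oset x y)) := by
    ext z
    simp only [mem_Iset, Finset.mem_insert, mem_Oset]
    constructor
    · rintro ⟨h1, h2⟩
      rcases eq_or_lt_of_le h1 with rfl | h1'
      · exact Or.inl rfl
      rcases eq_or_lt_of_le h2 with rfl | h2'
      · exact Or.inr (Or.inl rfl)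
      exact Or.inr (Or.inr ⟨h1', h2'⟩)
    · rintro (rfl | rfl | ⟨h1, h2⟩)
      · exact ⟨le_rfl, h.le⟩
      · exact ⟨h.le, le_rfl⟩
      · exact ⟨h1.le, h2.le⟩
  have hx : x ∉ insert y (Oset x y) := by
    simp only [Finset.mem_insert, mem_Oset]
    rintro (rfl | ⟨h1, _⟩)
    · exact hxy rfl
    · exact lt_irrefl x h1
  have hy : y ∉ Oset x y := by
    simp only [mem_Oset]
    rintro ⟨_, h2⟩
    exact lt_irrefl y h2
  rw [h1, Finset.sum_insert hx, Finset.sum_insert hy]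
  ring

/-- the sign function `(-1)^{ρ(b)-ρ(a)}`. -/
private noncomputable def sg (ρ : P → ℕ) (a b : P) : ℝ := (-1) ^ (ρ b - ρ a)

private lemma sg_self (x : P) : sg ρ x x = 1 := by simp [sg]

private lemma sg_sq (x y : P) : sg ρ x y * sg ρ x y = 1 := by
  rw [sg, ← pow_add]
  exact Even.neg_one_pow ⟨_, rfl⟩

private lemma sg_mul {x z y : P} (h1 : ρ x ≤ ρ z) (h2 : ρ z ≤ ρ y) :
    sg ρ x z * sg ρ z y = sg ρ x y := by
  show ((-1:ℝ)) ^ (ρ z - ρ x) * (-1) ^ (ρ y - ρ z) = (-1) ^ (ρ y - ρ x)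
  rw [← pow_add]
  congr 1
  omega

/-- `M = μ_{2k} + (2k-1)δ` -/
private noncomputable def Mf (k : ℝ) (x z : P) : ℝ :=
  if x = z then 2*k else muk (2*k) x z

/-- `U = ζ + (2k-1)δ` -/
private noncomputable def Uf (k : ℝ) (z y : P) : ℝ := if z = y then 2*k else 1

/-- `V = σ + (2k-1)δ` -/
private noncomputable def Vf (k : ℝ) (ρ : P → ℕ) (z y : P) : ℝ :=
  if z = y then 2*k else sg ρ z y

private noncomputable def conv (f g : P → P → ℝ) (x y : P) : ℝ :=
  ∑ z ∈ Iset x y, f x z * g z y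

private lemma conv_self (f g : P → P → ℝ) (x : P) :
    conv f g x x = f x x * g x x := by
  rw [conv, Iset_self, Finset.sum_singleton]

private lemma conv_congr_left {f f' g : P → P → ℝ} {x y : P}
    (h : ∀ z, x ≤ z → z ≤ y → f x z = f' x z) :
    conv f g x y = conv f' g x y := by
  apply Finset.sum_congr rfl
  intro z hz
  rw [mem_Iset] at hz
  rw [h z hz.1 hz.2]

private lemma conv_congr_right {f g g' : P → P → ℝ} {x y : P}
    (h : ∀ z, x ≤ z → z ≤ y → g z y = g' z y) :
    conv f g x y = conv f g' x y := by
  apply Finset.sum_congr rfl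
  intro z hz
  rw [mem_Iset] at hz
  rw [h z hz.1 hz.2]

private lemma conv_diag_left {x y : P} (h : x ≤ y) (c : ℝ) (g : P → P → ℝ) :
    conv (fun a b => if a = b then c else 0) g x y = c * g x y := by
  rw [conv, Finset.sum_eq_single_of_mem x (mem_Iset.mpr ⟨le_rfl, h⟩)]
  · rw [if_pos rfl]
  · intro z _ hne
    rw [if_neg (fun hh => hne hh.symm), zero_mul]

private lemma conv_sub_left {f f' g : P → P → ℝ} {x y : P} :
    conv (fun a b => f a b - f' a b) g x y = conv f g x y - conv f' g x y := by
  simp only [conv, sub_mul, Finset.sum_sub_distrib]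

private lemma conv_sub_right {f g g' : P → P → ℝ} {x y : P} :
    conv f (fun a b => g a b - g' a b) x y = conv f g x y - conv f g' x y := by
  simp only [conv, mul_sub, Finset.sum_sub_distrib]

private lemma conv_add_right {f g g' : P → P → ℝ} {x y : P} :
    conv f (fun a b => g a b + g' a b) x y = conv f g x y + conv f g' x y := by
  simp only [conv, mul_add, Finset.sum_add_distrib]

private lemma conv_smul_right {f g : P → P → ℝ} {x y : P} (c : ℝ) :
    conv f (fun a b => c * g a b) x y = c * conv f g x y := by
  rw [conv, conv, Finset.mul_sum]
  apply Finset.sum_congr rfl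
  intro z _
  ring

private lemma conv_assoc (f g h : P → P → ℝ) (x y : P) :
    conv (fun a b => conv f g a b) h x y = conv f (fun a b => conv g h a b) x y := by
  have L : conv (fun a b => conv f g a b) h x y =
      ∑ z ∈ Finset.univ, ∑ w ∈ Finset.univ,
        if x ≤ w ∧ w ≤ z ∧ z ≤ y then f x w * g w z * h z y else 0 := by
    rw [conv, Iset, Finset.sum_filter]
    apply Finset.sum_congr rfl
    intro z _
    by_cases h1 : x ≤ z ∧ z ≤ y
    · rw [if_pos h1, conv, Iset, Finset.sum_filter, Finset.sum_mul]
      apply Finset.sum_congr rfl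
      intro w _
      by_cases h2 : x ≤ w ∧ w ≤ z
      · rw [if_pos h2, if_pos ⟨h2.1, h2.2, h1.2⟩]
      · rw [if_neg h2, if_neg (by tauto), zero_mul]
    · rw [if_neg h1, eq_comm]
      apply Finset.sum_eq_zero
      intro w _
      apply if_neg
      rintro ⟨hw1, hw2, hw3⟩
      exact h1 ⟨hw1.trans hw2, hw3⟩
  have R : conv f (fun a b => conv g h a b) x y =
      ∑ w ∈ Finset.univ, ∑ z ∈ Finset.univ,
        if x ≤ w ∧ w ≤ z ∧ z ≤ y then f x w * g w z * h z y else 0 := by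
    rw [conv, Iset, Finset.sum_filter]
    apply Finset.sum_congr rfl
    intro w _
    by_cases h1 : x ≤ w ∧ w ≤ y
    · rw [if_pos h1, conv, Iset, Finset.sum_filter, Finset.mul_sum]
      apply Finset.sum_congr rfl
      intro z _
      by_cases h2 : w ≤ z ∧ z ≤ y
      · rw [if_pos h2, if_pos ⟨h1.1, h2.1, h2.2⟩]; ring
      · rw [if_neg h2, if_neg (by tauto), mul_zero]
    · rw [if_neg h1, eq_comm]
      apply Finset.sum_eq_zero
      intro z _
      apply if_neg
      rintro ⟨hw1, hw2, hw3⟩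
      exact h1 ⟨hw1, hw2.trans hw3⟩
  rw [L, R, Finset.sum_comm]

private lemma conv_sigma (hmono : ∀ a b : P, a ≤ b → ρ a ≤ ρ b)
    (f g : P → P → ℝ) (x y : P) :
    conv (fun a b => sg ρ a b * f a b) (fun a b => sg ρ a b * g a b) x y
      = sg ρ x y * conv f g x y := by
  rw [conv, conv, Finset.mul_sum]
  apply Finset.sum_congr rfl
  intro z hz
  rw [mem_Iset] at hz
  have hA := sg_mul (ρ := ρ) (hmono _ _ hz.1) (hmono _ _ hz.2)
  linear_combination (f x z * g z y) * hA

private lemma sgU_eq_V (a b : P) : sg ρ a b * Uf k a b = Vf k ρ a b := by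
  by_cases h : a = b
  · subst h; rw [Uf, Vf, if_pos rfl, if_pos rfl, sg_self, one_mul]
  · rw [Uf, Vf, if_neg h, if_neg h, mul_one]

private lemma sgU_eq_V' : (fun a b : P => sg ρ a b * Uf k a b) = Vf k ρ := by
  funext a b; exact sgU_eq_V a b

/-- the recursion identity `(μ_{2k} + (2k-1)δ) * (ζ + (2k-1)δ) = 4k²δ`. -/
private lemma star_MU (hk : k ≠ 0) (x y : P) (hxy : x ≤ y) :
    conv (Mf k) (Uf k) x y = if x = y then 4*k^2 else 0 := by
  have h2k : (2:ℝ)*k ≠ 0 := mul_ne_zero two_ne_zero hk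
  rcases eq_or_lt_of_le hxy with rfl | hlt
  · rw [if_pos rfl, conv_self, Mf, Uf, if_pos rfl, if_pos rfl]; ring
  · have hne : x ≠ y := ne_of_lt hlt
    rw [if_neg hne, conv, sum_Iset hlt (fun z => Mf k x z * Uf k z y)]
    have e1 : Mf k x x * Uf k x y = 2*k := by
      rw [Mf, Uf, if_pos rfl, if_neg hne]; ring
    have e2 : Mf k x y * Uf k y y = muk (2*k) x y * (2*k) := by
      rw [Mf, Uf, if_neg hne, if_pos rfl]
    have e3 : ∀ z ∈ Oset x y, Mf k x z * Uf k z y = muk (2*k) x z := by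
      intro z hz
      rw [mem_Oset] at hz
      rw [Mf, Uf, if_neg (ne_of_lt hz.1), if_neg (ne_of_lt hz.2), mul_one]
    rw [e1, e2, Finset.sum_congr rfl e3, muk_rec (2*k) hne]
    field_simp
    ring

private lemma cancel_right (hk : k ≠ 0) (g : P → P → ℝ)
    (H : ∀ x y : P, x ≤ y → conv g (Vf k ρ) x y = 0) :
    ∀ x y : P, x ≤ y → g x y = 0 := by
  have W := wellFounded_lt (α := P)
  have key : ∀ y x : P, x ≤ y → g x y = 0 := by
    intro y
    induction y using WellFounded.induction W with
    | _ y ih =>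
      intro x hxy
      have h0 := H x y hxy
      rw [conv, Finset.sum_eq_single_of_mem y (mem_Iset.mpr ⟨hxy, le_rfl⟩)] at h0
      · rw [Vf, if_pos rfl] at h0
        have h2k : (2:ℝ)*k ≠ 0 := mul_ne_zero two_ne_zero hk
        exact (mul_eq_zero.mp h0).resolve_right h2k
      · intro z hz hne
        rw [mem_Iset] at hz
        rw [ih z (lt_of_le_of_ne hz.2 hne) x hz.1, zero_mul]
  exact fun x y h => key y x h

private lemma cancel_left (hk : k ≠ 0) (g : P → P → ℝ)
    (H : ∀ x y : P, x ≤ y → conv (Mf k) g x y = 0) :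
    ∀ x y : P, x ≤ y → g x y = 0 := by
  have W := wellFounded_gt (α := P)
  have key : ∀ x y : P, x ≤ y → g x y = 0 := by
    intro x
    induction x using WellFounded.induction W with
    | _ x ih =>
      intro y hxy
      have h0 := H x y hxy
      rw [conv, Finset.sum_eq_single_of_mem x (mem_Iset.mpr ⟨le_rfl, hxy⟩)] at h0
      · rw [Mf, if_pos rfl] at h0
        have h2k : (2:ℝ)*k ≠ 0 := mul_ne_zero two_ne_zero hk
        exact (mul_eq_zero.mp h0).resolve_left h2k
      · intro z hz hne
        rw [mem_Iset] at hz
        rw [ih z (lt_of_le_of_ne hz.1 (Ne.symm hne)) y hz.2, mul_zero]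
  exact key

private lemma convUV (hmono : ∀ a b : P, a ≤ b → ρ a ≤ ρ b) {x y : P} (h : x < y) :
    conv (Uf k) (Vf k ρ) x y
      = (∑ z ∈ Iset x y, sg ρ x z) * sg ρ x y + (2*k-1)*(sg ρ x y + 1) := by
  have hne : x ≠ y := ne_of_lt h
  rw [conv, sum_Iset h (fun z => Uf k x z * Vf k ρ z y), sum_Iset h (fun z => sg ρ x z)]
  have e1 : Uf k x x * Vf k ρ x y = 2*k * sg ρ x y := by
    rw [Uf, Vf, if_pos rfl, if_neg hne]
  have e2 : Uf k x y * Vf k ρ y y = 2*k := by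
    rw [Uf, Vf, if_neg hne, if_pos rfl]; ring
  have e3 : ∀ z ∈ Oset x y, Uf k x z * Vf k ρ z y = sg ρ x z * sg ρ x y := by
    intro z hz
    rw [mem_Oset] at hz
    rw [Uf, Vf, if_neg (ne_of_lt hz.1), if_neg (ne_of_lt hz.2), one_mul]
    have hA := sg_mul (ρ := ρ) (hmono _ _ hz.1.le) (hmono _ _ hz.2.le)
    have hB := sg_sq (ρ := ρ) x z
    linear_combination sg ρ x z * hA - sg ρ z y * hB
  rw [e1, e2, Finset.sum_congr rfl e3, ← Finset.sum_mul, sg_self]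
  have h2 := sg_sq (ρ := ρ) x y
  linear_combination (-1 : ℝ) * h2

end HalfAux

section HalfMain

open Finset

variable {P : Type} [PartialOrder P] [Fintype P] {ρ : P → ℕ} {k : ℝ}

/-- Eulerianness implies the flag condition `B`. -/
private lemma L1f (hk : k ≠ 0)
    (hE : ∀ x y : P, x ≤ y → muk k x y = sg ρ x y) :
    ∀ x y : P, x < y → (∑ z ∈ Iset x y, sg ρ x z) = (1-k)*(1 + sg ρ x y) := by
  intro x y h
  have hmu := hE x y h.le
  rw [muk_rec k (ne_of_lt h)] at hmu
  have hS : ∑ z ∈ Oset x y, muk k x z = ∑ z ∈ Oset x y, sg ρ x z := by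
    apply Finset.sum_congr rfl
    intro z hz
    exact hE x z (mem_Oset.mp hz).1.le
  rw [hS] at hmu
  have hSv : ∑ z ∈ Oset x y, sg ρ x z = k * (-1 - sg ρ x y) := by
    have h1 : (1/k) * ∑ z ∈ Oset x y, sg ρ x z = -1 - sg ρ x y := by linarith
    rw [← h1]
    field_simp
  rw [sum_Iset h (fun z => sg ρ x z), sg_self, hSv]
  ring

/-- the flag condition `B` implies Eulerianness. -/
private lemma L1b (hk : k ≠ 0)
    (hB : ∀ x y : P, x < y → (∑ z ∈ Iset x y, sg ρ x z) = (1-k)*(1 + sg ρ x y)) :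
    ∀ x y : P, x ≤ y → muk k x y = sg ρ x y := by
  have W := wellFounded_lt (α := P)
  have key : ∀ y x : P, x ≤ y → muk k x y = sg ρ x y := by
    intro y
    induction y using WellFounded.induction W with
    | _ y ih =>
      intro x hxy
      rcases eq_or_lt_of_le hxy with rfl | hlt
      · rw [muk_self, sg_self]
      · rw [muk_rec k (ne_of_lt hlt)]
        have hS : ∑ z ∈ Oset x y, muk k x z = ∑ z ∈ Oset x y, sg ρ x z := by
          apply Finset.sum_congr rfl
          intro z hz
          rw [mem_Oset] at hz
          exact ih z hz.2 x hz.1.le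
        rw [hS]
        have hBB := hB x y hlt
        rw [sum_Iset hlt (fun z => sg ρ x z), sg_self] at hBB
        have hSv : ∑ z ∈ Oset x y, sg ρ x z = k * (-1 - sg ρ x y) := by
          linear_combination hBB
        rw [hSv]
        field_simp
        ring
  exact fun x y h => key y x h

/-- `μ_{2k}` vanishing on even intervals implies the flag condition `B`. -/
private lemma L2f (hk : k ≠ 0) (hmono : ∀ a b : P, a ≤ b → ρ a ≤ ρ b)
    (hC : ∀ x y : P, x < y → Even (ρ y - ρ x) → muk (2*k) x y = 0) :
    ∀ x y : P, x < y → (∑ z ∈ Iset x y, sg ρ x z) = (1-k)*(1 + sg ρ x y) := by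
  -- pointwise identity: σ·M = 4kδ - M
  have hW : ∀ x y : P, x ≤ y → sg ρ x y * Mf k x y
      = (if x = y then 4*k else 0) - Mf k x y := by
    intro x y hxy
    rcases eq_or_lt_of_le hxy with rfl | hlt
    · rw [if_pos rfl, sg_self, Mf, if_pos rfl]; ring
    · rw [if_neg (ne_of_lt hlt), Mf, if_neg (ne_of_lt hlt)]
      rcases Nat.even_or_odd (ρ y - ρ x) with he | ho
      · rw [hC x y hlt he, sg]
        rw [he.neg_one_pow]
        ring
      · rw [sg, ho.neg_one_pow]
        ring
  -- consequence: conv M V x y = 4kσ for x < y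
  have hMV : ∀ x y : P, x < y → conv (Mf k) (Vf k ρ) x y = 4*k*(sg ρ x y) := by
    intro x y hlt
    have h1 : conv (fun a b => sg ρ a b * Mf k a b) (fun a b => sg ρ a b * Uf k a b) x y
        = sg ρ x y * conv (Mf k) (Uf k) x y := conv_sigma hmono _ _ x y
    rw [star_MU hk x y hlt.le, if_neg (ne_of_lt hlt), mul_zero, sgU_eq_V'] at h1
    rw [conv_congr_left (f' := fun a b => (if a = b then 4*k else 0) - Mf k a b)
      (fun z hz1 _ => hW x z hz1)] at h1
    rw [conv_sub_left, conv_diag_left hlt.le, Vf, if_neg (ne_of_lt hlt)] at h1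
    linarith
  -- cancellation argument: conv U V = k(U+V)
  have hMg : ∀ x y : P, x ≤ y →
      conv (Mf k) (fun a b => conv (Uf k) (Vf k ρ) a b
        - k * (Uf k a b + Vf k ρ a b)) x y = 0 := by
    intro x y hxy
    rw [conv_sub_right, conv_smul_right, conv_add_right]
    have hL : conv (Mf k) (fun a b => conv (Uf k) (Vf k ρ) a b) x y
        = 4*k^2 * Vf k ρ x y := by
      rw [← conv_assoc (Mf k) (Uf k) (Vf k ρ) x y]
      rw [conv_congr_left (f' := fun a b => if a = b then 4*k^2 else 0)
        (fun z hz1 _ => star_MU hk x z hz1)]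
      exact conv_diag_left hxy _ _
    rw [hL, star_MU hk x y hxy]
    rcases eq_or_lt_of_le hxy with rfl | hlt
    · rw [if_pos rfl, conv_self, Mf, if_pos rfl, Vf, if_pos rfl]; ring
    · rw [if_neg (ne_of_lt hlt), hMV x y hlt, Vf, if_neg (ne_of_lt hlt)]; ring
  have hg := cancel_left hk _ hMg
  intro x y hlt
  have hgg := hg x y hlt.le
  rw [sub_eq_zero, convUV hmono hlt, Uf, Vf, if_neg (ne_of_lt hlt),
    if_neg (ne_of_lt hlt)] at hgg
  have h2 := sg_sq (ρ := ρ) x y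
  linear_combination (sg ρ x y) * hgg
    - ((∑ z ∈ Iset x y, sg ρ x z) + k - 1) * h2

/-- the flag condition `B` implies `μ_{2k}` vanishes on even intervals. -/
private lemma L2b (hk : k ≠ 0) (hmono : ∀ a b : P, a ≤ b → ρ a ≤ ρ b)
    (hB : ∀ x y : P, x < y → (∑ z ∈ Iset x y, sg ρ x z) = (1-k)*(1 + sg ρ x y)) :
    ∀ x y : P, x < y → Even (ρ y - ρ x) → muk (2*k) x y = 0 := by
  have hUV : ∀ x y : P, x ≤ y →
      conv (Uf k) (Vf k ρ) x y = k * (Uf k x y + Vf k ρ x y) := by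
    intro x y hxy
    rcases eq_or_lt_of_le hxy with rfl | hlt
    · rw [conv_self, Uf, Vf, if_pos rfl, if_pos rfl]; ring
    · rw [convUV hmono hlt, hB x y hlt, Uf, Vf, if_neg (ne_of_lt hlt),
        if_neg (ne_of_lt hlt)]
      have h2 := sg_sq (ρ := ρ) x y
      linear_combination (1-k) * h2
  have hMV : ∀ x y : P, x < y → conv (Mf k) (Vf k ρ) x y = 4*k*(sg ρ x y) := by
    intro x y hlt
    have hL : conv (Mf k) (fun a b => conv (Uf k) (Vf k ρ) a b) x y
        = 4*k^2 * sg ρ x y := by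
      rw [← conv_assoc (Mf k) (Uf k) (Vf k ρ) x y]
      rw [conv_congr_left (f' := fun a b => if a = b then 4*k^2 else 0)
        (fun z hz1 _ => star_MU hk x z hz1)]
      rw [conv_diag_left hlt.le, Vf, if_neg (ne_of_lt hlt)]
    have hR : conv (Mf k) (fun a b => conv (Uf k) (Vf k ρ) a b) x y
        = k * conv (Mf k) (Uf k) x y + k * conv (Mf k) (Vf k ρ) x y := by
      rw [conv_congr_right (g' := fun a b => k * (Uf k a b + Vf k ρ a b))
        (fun z _ hz2 => hUV z y hz2)]
      rw [conv_smul_right, conv_add_right]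
      ring
    rw [hL, star_MU hk x y hlt.le, if_neg (ne_of_lt hlt), mul_zero, zero_add] at hR
    apply mul_left_cancel₀ hk
    rw [← hR]
    ring
  have hg' : ∀ x y : P, x ≤ y →
      conv (fun a b => sg ρ a b * Mf k a b
        - ((if a = b then 4*k else 0) - Mf k a b)) (Vf k ρ) x y = 0 := by
    intro x y hxy
    rw [conv_sub_left, conv_sub_left, conv_diag_left hxy]
    have h1 : conv (fun a b => sg ρ a b * Mf k a b) (Vf k ρ) x y
        = sg ρ x y * conv (Mf k) (Uf k) x y := by
      rw [← sgU_eq_V' (ρ := ρ) (k := k)]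
      exact conv_sigma hmono _ _ x y
    rw [h1, star_MU hk x y hxy]
    rcases eq_or_lt_of_le hxy with rfl | hlt
    · rw [sg_self, conv_self, Mf, Vf, if_pos rfl, if_pos rfl, if_pos rfl]
      ring
    · rw [hMV x y hlt, Vf, if_neg (ne_of_lt hlt), if_neg (ne_of_lt hlt)]
      ring
  have hz := cancel_right hk _ hg'
  intro x y hlt he
  have h0 := hz x y hlt.le
  rw [if_neg (ne_of_lt hlt), Mf, if_neg (ne_of_lt hlt), sg, he.neg_one_pow] at h0
  linarith

end HalfMain

/-- `P` is `k`-Eulerian iff `μ_{2k}` vanishes on every interval of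
positive even rank. -/
theorem isKEulerian_iff_muk_two_k {P : Type} [PartialOrder P] [BoundedOrder P] [Finite P]
    (n : ℕ) (ρ : P → ℕ) (hP : IsGraded P ρ n) (k : ℝ) (hk : 0 < k) :
    IsKEulerian P ρ k ↔
      ∀ x y : P, x ≤ y → 0 < ρ y - ρ x → Even (ρ y - ρ x) →
        muk (2 * k) x y = 0 := by
  have hk0 : k ≠ 0 := ne_of_gt hk
  have hstrict : ∀ x y : P, x < y → ρ x < ρ y := by
    have H := wellFounded_gt (α := P)
    intro x
    induction x using WellFounded.induction H with
    | _ x ih =>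
      intro y hxy
      obtain ⟨z, hz, hzy⟩ := exists_covBy_le_of_lt hxy
      rcases eq_or_lt_of_le hzy with rfl | hzy'
      · rw [hP.2.2 _ _ hz]; omega
      · have h1 := ih z hz.lt y hzy'
        have h2 := hP.2.2 _ _ hz
        omega
  have hmono : ∀ x y : P, x ≤ y → ρ x ≤ ρ y := by
    intro x y h
    rcases eq_or_lt_of_le h with rfl | h'
    · exact le_rfl
    · exact (hstrict _ _ h').le
  constructor
  · intro hE x y hxy hpos heven
    have hne : x ≠ y := by rintro rfl; omega
    have hE' : ∀ x y : P, x ≤ y → muk k x y = sg ρ x y := fun x y h => hE x y h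
    exact L2b hk0 hmono (L1f hk0 hE') x y (lt_of_le_of_ne hxy hne) heven
  · intro hC x y hxy
    have hC' : ∀ x y : P, x < y → Even (ρ y - ρ x) → muk (2*k) x y = 0 := by
      intro x y h he
      have := hstrict x y h
      exact hC x y h.le (by omega) he
    exact L1b hk0 (L2f hk0 hmono hC') x y hxy
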